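/- Let 0 < α < 2 and define k(z,x) = e^{i⟨z,x⟩} − 1 − i·1_{‖x‖≤1}(x)·⟨z,x⟩ for z, x ∈ ℝ². Then for every z ∈ ℝ², Re ∫_{ℝ²} k(z,x) ‖x‖^{−2−α} dx = c₀ c₁ ‖z‖^α, where c₀ = ∫₀^∞ (cos r − 1) r^{−1−α} dr and c₁ = ∫₀^{2π} |cos s|^α ds (and the imaginary part vanishes by symmetry). -/

import Mathlib

open MeasureTheory Set

noncomputable section Stmt3Aux

namespace Stmt3Aux

lemma kdecomp (b c : ℝ) (P : Prop) [Decidable P] :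
    (Complex.exp (Complex.I * (b : ℂ)) - 1 - Complex.I * (if P then (b : ℂ) else 0)) *
        ((c : ℝ) : ℂ)
      = (((Real.cos b - 1) * c : ℝ) : ℂ)
        + (((Real.sin b - (if P then b else 0)) * c : ℝ) : ℂ) * Complex.I := by
  rw [mul_comm Complex.I (b : ℂ), Complex.exp_mul_I, ← Complex.ofReal_cos, ← Complex.ofReal_sin]
  split_ifs <;> push_cast <;> ring

lemma norm_mk_le (x y : ℝ) : ‖((x : ℂ) + (y : ℂ) * Complex.I : ℂ)‖ ≤ |x| + |y| := by
  refine (norm_add_le _ _).trans ?_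
  simp [map_mul, Complex.norm_real, Complex.norm_I]

lemma sub_sin_le (a : ℝ) (ha : 0 ≤ a) : a - a ^ 2 / 2 ≤ Real.sin a := by
  have hder : ∀ x : ℝ, HasDerivAt (fun x : ℝ => Real.sin x - x + x ^ 2 / 2)
      (Real.cos x - 1 + x) x := by
    intro x
    have h1 := (Real.hasDerivAt_sin x).sub (hasDerivAt_id x)
    have h2 := (hasDerivAt_pow 2 x).div_const 2
    refine (h1.add h2).congr_deriv ?_
    simp
  have hmono : MonotoneOn (fun x : ℝ => Real.sin x - x + x ^ 2 / 2) (Ici 0) := by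
    apply monotoneOn_of_deriv_nonneg (convex_Ici 0)
    · exact Continuous.continuousOn (by continuity)
    · intro x _
      exact ((hder x).differentiableAt).differentiableWithinAt
    · intro x hx
      rw [(hder x).deriv]
      have h1 := Real.one_sub_sq_div_two_le_cos (x := x)
      have h2 := Real.neg_one_le_cos x
      rw [interior_Ici, mem_Ioi] at hx
      rcases le_total x 2 with h | h
      · nlinarith
      · nlinarith
  have := hmono self_mem_Ici (mem_Ici.mpr ha) ha
  simp only [Real.sin_zero] at this
  nlinarith [this]

lemma abs_sin_sub (a : ℝ) : |Real.sin a - a| ≤ a ^ 2 / 2 := by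
  rcases le_total 0 a with ha | ha
  · rw [abs_sub_comm, abs_of_nonneg (by linarith [Real.sin_le ha])]
    linarith [sub_sin_le a ha]
  · have h1 := sub_sin_le (-a) (by linarith)
    have h2 := Real.le_sin ha
    rw [Real.sin_neg] at h1
    rw [abs_of_nonneg (by linarith)]
    nlinarith

lemma abs_cos_sub_one (a : ℝ) : |Real.cos a - 1| ≤ a ^ 2 / 2 := by
  rw [abs_sub_comm, abs_of_nonneg (by linarith [Real.cos_le_one a])]
  linarith [Real.one_sub_sq_div_two_le_cos (x := a)]

lemma abs_cos_sub_one' (a : ℝ) : |Real.cos a - 1| ≤ 2 := by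
  rw [abs_sub_comm, abs_of_nonneg (by linarith [Real.cos_le_one a])]
  linarith [Real.neg_one_le_cos a]

variable {α : ℝ}

lemma integrableOn_H (hα : 0 < α) (hα2 : α < 2) (C D : ℝ) :
    IntegrableOn (fun r : ℝ => (if r ≤ 1 then C * r ^ 2 else D) * r ^ (-1 - α)) (Ioi 0) := by
  have h1 : IntegrableOn (fun r : ℝ => (if r ≤ 1 then C * r ^ 2 else D) * r ^ (-1 - α))
      (Ioc 0 1) := by
    have base : IntegrableOn (fun r : ℝ => C * r ^ (1 - α)) (Ioc 0 1) := by
      apply Integrable.const_mul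
      have h := intervalIntegral.intervalIntegrable_rpow' (a := 0) (b := 1)
        (r := 1 - α) (by linarith)
      rwa [intervalIntegrable_iff_integrableOn_Ioc_of_le zero_le_one] at h
    refine base.congr_fun (fun r hr => ?_) measurableSet_Ioc
    rw [if_pos hr.2]
    have h2 : r ^ (2 : ℕ) = r ^ ((2 : ℕ) : ℝ) := (Real.rpow_natCast r 2).symm
    rw [h2, show (1 - α) = ((2 : ℕ) : ℝ) + (-1 - α) by push_cast; ring]
    beta_reduce
    rw [Real.rpow_add hr.1]
    ring
  have h2 : IntegrableOn (fun r : ℝ => (if r ≤ 1 then C * r ^ 2 else D) * r ^ (-1 - α))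
      (Ioi 1) := by
    have base : IntegrableOn (fun r : ℝ => D * r ^ (-1 - α)) (Ioi 1) :=
      (integrableOn_Ioi_rpow_of_lt (by linarith) zero_lt_one).const_mul D
    exact base.congr_fun (fun r hr => by rw [if_neg (not_le.mpr hr)]) measurableSet_Ioi
  have := h1.union h2
  rwa [Ioc_union_Ioi_eq_Ioi zero_le_one] at this

open Real in
lemma integrableOn_H2 (hα : 0 < α) (hα2 : α < 2) (C D : ℝ) :
    IntegrableOn (fun p : ℝ × ℝ => (if p.1 ≤ 1 then C * p.1 ^ 2 else D) * p.1 ^ (-1 - α))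
      (Ioi (0 : ℝ) ×ˢ Ioo (-π) π) := by
  rw [IntegrableOn, Measure.volume_eq_prod, ← Measure.prod_restrict]
  have h1 := integrableOn_H hα hα2 C D
  have h2 : Integrable (fun _ : ℝ => (1 : ℝ)) (volume.restrict (Ioo (-π) π)) :=
    integrableOn_const measure_Ioo_lt_top.ne
  simpa using h1.mul_prod h2

open Real in
lemma integrableOn_target {E : Type*} [NormedAddCommGroup E]
    (hα : 0 < α) (hα2 : α < 2) (C D : ℝ) (f : ℝ × ℝ → E)
    (hm : AEStronglyMeasurable f (volume.restrict (Ioi (0 : ℝ) ×ˢ Ioo (-π) π)))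
    (hb : ∀ p ∈ Ioi (0 : ℝ) ×ˢ Ioo (-π) π,
      ‖f p‖ ≤ (if p.1 ≤ 1 then C * p.1 ^ 2 else D) * p.1 ^ (-1 - α)) :
    IntegrableOn f (Ioi (0 : ℝ) ×ˢ Ioo (-π) π) :=
  (integrableOn_H2 hα hα2 C D).mono' hm
    ((ae_restrict_iff' (measurableSet_Ioi.prod measurableSet_Ioo)).2 (ae_of_all _ hb))

open Real in
lemma integrable_iff_polar {E : Type*} [NormedAddCommGroup E] [NormedSpace ℝ E] (f : ℂ → E) :
    Integrable f ↔ IntegrableOn (fun p : ℝ × ℝ => p.1 • f (Complex.polarCoord.symm p))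
      polarCoord.target := by
  have h0 : Integrable f ↔ Integrable (f ∘ Complex.measurableEquivRealProd.symm) volume :=
    ((Complex.volume_preserving_equiv_real_prod.symm).integrable_comp_emb
      Complex.measurableEquivRealProd.symm.measurableEmbedding).symm
  have h1 : Integrable (f ∘ Complex.measurableEquivRealProd.symm) volume ↔
      IntegrableOn (f ∘ Complex.measurableEquivRealProd.symm) polarCoord.source := by
    rw [IntegrableOn, Measure.restrict_congr_set polarCoord_source_ae_eq_univ,
      Measure.restrict_univ]
  rw [h0, h1, ← polarCoord.symm_image_target_eq_source]
  rw [integrableOn_image_iff_integrableOn_abs_det_fderiv_smul volume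
    polarCoord.open_target.measurableSet
    (fun p _ => (hasFDerivAt_polarCoord_symm p).hasFDerivWithinAt)
    polarCoord.symm.injOn (f ∘ Complex.measurableEquivRealProd.symm)]
  apply integrableOn_congr_fun _ polarCoord.open_target.measurableSet
  intro p hp
  have hdet : (LinearMap.toContinuousLinearMap (Matrix.toLin (Module.Basis.finTwoProd ℝ)
      (Module.Basis.finTwoProd ℝ)
      !![Real.cos p.2, -p.1 * Real.sin p.2; Real.sin p.2, p.1 * Real.cos p.2])).det = p.1 := by
    conv_rhs => rw [← one_mul p.1, ← Real.cos_sq_add_sin_sq p.2]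
    simp only [neg_mul, LinearMap.det_toContinuousLinearMap, LinearMap.det_toLin,
      Matrix.det_fin_two_of, sub_neg_eq_add]
    ring
  rw [polarCoord_target] at hp
  dsimp only
  rw [det_fderivPolarCoordSymm, abs_of_pos hp.1]
  rfl

open Real in
lemma integrable_kernel (hα : 0 < α) (hα2 : α < 2) (t : ℝ) (ht : 0 ≤ t) :
    Integrable (fun x : ℂ =>
      (Complex.exp (Complex.I * ((t * x.re : ℝ) : ℂ)) - 1 -
          Complex.I * (if ‖x‖ ≤ 1 then ((t * x.re : ℝ) : ℂ) else 0)) *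
        ((‖x‖ ^ (-2 - α) : ℝ) : ℂ)) := by
  rw [integrable_iff_polar, polarCoord_target]
  have hmf : Measurable (fun x : ℂ =>
      (Complex.exp (Complex.I * ((t * x.re : ℝ) : ℂ)) - 1 -
          Complex.I * (if ‖x‖ ≤ 1 then ((t * x.re : ℝ) : ℂ) else 0)) *
        ((‖x‖ ^ (-2 - α) : ℝ) : ℂ)) := by
    have hre : Measurable fun x : ℂ => ((t * x.re : ℝ) : ℂ) :=
      Complex.measurable_ofReal.comp (measurable_const.mul Complex.measurable_re)
    apply Measurable.mul
    · apply Measurable.sub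
      · exact (Complex.continuous_exp.measurable.comp (hre.const_mul Complex.I)).sub
          measurable_const
      · exact (Measurable.ite (measurableSet_le measurable_norm measurable_const)
          hre measurable_const).const_mul Complex.I
    · exact Complex.measurable_ofReal.comp (by fun_prop)
  have hsymm_cont : Continuous (⇑Complex.polarCoord.symm) := by
    have : (⇑Complex.polarCoord.symm) =
        fun p : ℝ × ℝ => ((p.1 * (Real.cos p.2 + Real.sin p.2 * Complex.I)) : ℂ) :=
      funext Complex.polarCoord_symm_apply
    rw [this]; continuity
  apply integrableOn_target hα hα2 (t ^ 2) 3
  · exact ((measurable_fst.smul (hmf.comp hsymm_cont.measurable)).aestronglyMeasurable).restrict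
  · rintro p ⟨hr, -⟩
    rw [mem_Ioi] at hr
    have hxnorm : ‖Complex.polarCoord.symm p‖ = p.1 := by
      rw [Complex.norm_polarCoord_symm, abs_of_pos hr]
    have hxre : (Complex.polarCoord.symm p).re = p.1 * Real.cos p.2 := by
      simp [Complex.polarCoord_symm_apply, Complex.mul_re, Complex.add_re, Complex.mul_im,
        Complex.add_im, Complex.cos_ofReal_re, Complex.sin_ofReal_re]
    rw [hxnorm, hxre, kdecomp]
    set b := t * (p.1 * Real.cos p.2) with hb
    set c := p.1 ^ (-2 - α) with hc
    have hc0 : (0 : ℝ) ≤ c := Real.rpow_nonneg hr.le _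
    have hpow : p.1 ^ (-1 - α) = p.1 * c := by
      rw [hc, show (-1 - α) = 1 + (-2 - α) by ring, Real.rpow_add hr, Real.rpow_one]
    have hkey : |Real.cos b - 1| + |Real.sin b - (if p.1 ≤ 1 then b else 0)|
        ≤ (if p.1 ≤ 1 then t ^ 2 * p.1 ^ 2 else 3) := by
      split_ifs with h
      · have h1 := abs_cos_sub_one b
        have h2 := abs_sin_sub b
        have h3 : b ^ 2 ≤ t ^ 2 * p.1 ^ 2 := by
          have hcs : (Real.cos p.2) ^ 2 ≤ 1 := Real.cos_sq_le_one p.2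
          have hb2 : b ^ 2 = t ^ 2 * p.1 ^ 2 * (Real.cos p.2) ^ 2 := by rw [hb]; ring
          nlinarith [sq_nonneg (t * p.1)]
        linarith
      · have h1 := abs_cos_sub_one' b
        have h2 : |Real.sin b - 0| ≤ 1 := by
          rw [sub_zero]
          exact abs_le.mpr ⟨Real.neg_one_le_sin b, Real.sin_le_one b⟩
        linarith
    calc ‖p.1 • ((((Real.cos b - 1) * c : ℝ) : ℂ)
          + (((Real.sin b - (if p.1 ≤ 1 then b else 0)) * c : ℝ) : ℂ) * Complex.I)‖
        = p.1 * ‖((((Real.cos b - 1) * c : ℝ) : ℂ)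
          + (((Real.sin b - (if p.1 ≤ 1 then b else 0)) * c : ℝ) : ℂ) * Complex.I)‖ := by
          rw [norm_smul, Real.norm_eq_abs, abs_of_pos hr]
      _ ≤ p.1 * (|(Real.cos b - 1) * c| + |(Real.sin b - (if p.1 ≤ 1 then b else 0)) * c|) := by
          exact mul_le_mul_of_nonneg_left (norm_mk_le _ _) hr.le
      _ = (|Real.cos b - 1| + |Real.sin b - (if p.1 ≤ 1 then b else 0)|) * (p.1 * c) := by
          rw [abs_mul, abs_mul, abs_of_nonneg hc0]; ring
      _ ≤ (if p.1 ≤ 1 then t ^ 2 * p.1 ^ 2 else 3) * (p.1 * c) :=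
          mul_le_mul_of_nonneg_right hkey (by positivity)
      _ = (if p.1 ≤ 1 then t ^ 2 * p.1 ^ 2 else 3) * p.1 ^ (-1 - α) := by rw [hpow]

lemma radial (hα : 0 < α) (b : ℝ) :
    ∫ r in Ioi (0 : ℝ), (Real.cos (b * r) - 1) * r ^ (-1 - α)
      = |b| ^ α * ∫ r in Ioi (0 : ℝ), (Real.cos r - 1) * r ^ (-1 - α) := by
  rcases eq_or_ne b 0 with rfl | hb
  · simp [Real.zero_rpow hα.ne']
  · have ha : 0 < |b| := abs_pos.mpr hb
    set c₀ := ∫ r in Ioi (0 : ℝ), (Real.cos r - 1) * r ^ (-1 - α) with hc₀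
    have step1 : ∀ r ∈ Ioi (0 : ℝ), (Real.cos (b * r) - 1) * r ^ (-1 - α)
        = |b| ^ (1 + α) * ((Real.cos (|b| * r) - 1) * (|b| * r) ^ (-1 - α)) := by
      intro r hr
      rw [mem_Ioi] at hr
      have hcos : Real.cos (b * r) = Real.cos (|b| * r) := by
        rcases abs_cases b with ⟨h1, _⟩ | ⟨h1, _⟩
        · rw [h1]
        · rw [h1, neg_mul, Real.cos_neg]
      have hone : |b| ^ (1 + α) * |b| ^ (-1 - α) = 1 := by
        rw [← Real.rpow_add ha, show (1 + α) + (-1 - α) = 0 by ring, Real.rpow_zero]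
      rw [hcos, Real.mul_rpow (abs_nonneg b) hr.le]
      calc (Real.cos (|b| * r) - 1) * r ^ (-1 - α)
          = (|b| ^ (1 + α) * |b| ^ (-1 - α)) * ((Real.cos (|b| * r) - 1) * r ^ (-1 - α)) := by
            rw [hone, one_mul]
        _ = |b| ^ (1 + α) * ((Real.cos (|b| * r) - 1) * (|b| ^ (-1 - α) * r ^ (-1 - α))) := by
            ring
    rw [setIntegral_congr_fun measurableSet_Ioi step1, MeasureTheory.integral_const_mul]
    have h2 := MeasureTheory.integral_comp_mul_left_Ioi
      (fun u => (Real.cos u - 1) * u ^ (-1 - α)) 0 ha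
    rw [mul_zero] at h2
    rw [h2, smul_eq_mul, ← hc₀]
    have h3 : |b| ^ (1 + α) = |b| * |b| ^ α := by
      rw [Real.rpow_add ha, Real.rpow_one]
    rw [h3]
    field_simp

open Real in
lemma polar_real (hα : 0 < α) (hα2 : α < 2) (t : ℝ) (ht : 0 < t) :
    (∫ x : ℂ, (Real.cos (t * x.re) - 1) * ‖x‖ ^ (-2 - α))
      = ((∫ r in Ioi (0 : ℝ), (Real.cos r - 1) * r ^ (-1 - α)) *
          (∫ s in (0 : ℝ)..(2 * π), |Real.cos s| ^ α)) * t ^ α := by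
  set c₀ := ∫ r in Ioi (0 : ℝ), (Real.cos r - 1) * r ^ (-1 - α) with hc₀
  rw [← Complex.integral_comp_polarCoord_symm
    (fun x : ℂ => (Real.cos (t * x.re) - 1) * ‖x‖ ^ (-2 - α)), polarCoord_target]
  have heq : EqOn
      (fun p : ℝ × ℝ => p.1 • ((Real.cos (t * (Complex.polarCoord.symm p).re) - 1) *
        ‖Complex.polarCoord.symm p‖ ^ (-2 - α)))
      (fun p : ℝ × ℝ => (Real.cos ((t * Real.cos p.2) * p.1) - 1) * p.1 ^ (-1 - α))
      (Ioi (0 : ℝ) ×ˢ Ioo (-π) π) := by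
    rintro p ⟨hr, -⟩
    rw [mem_Ioi] at hr
    have hxnorm : ‖Complex.polarCoord.symm p‖ = p.1 := by
      rw [Complex.norm_polarCoord_symm, abs_of_pos hr]
    have hxre : (Complex.polarCoord.symm p).re = p.1 * Real.cos p.2 := by
      simp [Complex.polarCoord_symm_apply, Complex.mul_re, Complex.add_re, Complex.mul_im,
        Complex.add_im, Complex.cos_ofReal_re, Complex.sin_ofReal_re]
    dsimp only
    rw [hxnorm, hxre, smul_eq_mul, show (-1 - α) = 1 + (-2 - α) by ring,
      Real.rpow_add hr, Real.rpow_one, show t * (p.1 * Real.cos p.2)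
        = (t * Real.cos p.2) * p.1 by ring]
    ring
  rw [setIntegral_congr_fun (measurableSet_Ioi.prod measurableSet_Ioo) heq]
  have hint : IntegrableOn
      (fun p : ℝ × ℝ => (Real.cos ((t * Real.cos p.2) * p.1) - 1) * p.1 ^ (-1 - α))
      (Ioi (0 : ℝ) ×ˢ Ioo (-π) π) := by
    apply integrableOn_target hα hα2 (t ^ 2) 3
    · exact (Measurable.aestronglyMeasurable (by fun_prop)).restrict
    · rintro p ⟨hr, -⟩
      rw [mem_Ioi] at hr
      rw [Real.norm_eq_abs, abs_mul, abs_of_nonneg (Real.rpow_nonneg hr.le _)]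
      apply mul_le_mul_of_nonneg_right _ (Real.rpow_nonneg hr.le _)
      split_ifs with h
      · have h1 := abs_cos_sub_one ((t * Real.cos p.2) * p.1)
        have h3 : ((t * Real.cos p.2) * p.1) ^ 2 ≤ t ^ 2 * p.1 ^ 2 := by
          have hcs : (Real.cos p.2) ^ 2 ≤ 1 := Real.cos_sq_le_one p.2
          nlinarith [sq_nonneg (t * p.1)]
        nlinarith [sq_nonneg (t * Real.cos p.2 * p.1), mul_nonneg (sq_nonneg t) (sq_nonneg p.1)]
      · linarith [abs_cos_sub_one' ((t * Real.cos p.2) * p.1)]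
  rw [IntegrableOn, Measure.volume_eq_prod, ← Measure.prod_restrict] at hint
  rw [Measure.volume_eq_prod, ← Measure.prod_restrict,
    integral_prod_symm _ hint]
  have hinner : ∀ θ : ℝ, (∫ r in Ioi (0 : ℝ),
      (Real.cos ((t * Real.cos θ) * r) - 1) * r ^ (-1 - α)) = |t * Real.cos θ| ^ α * c₀ :=
    fun θ => radial hα _
  simp_rw [hinner, abs_mul, abs_of_pos ht, Real.mul_rpow ht.le (abs_nonneg _)]
  have hrw : ∀ θ : ℝ, t ^ α * |Real.cos θ| ^ α * c₀ = (t ^ α * c₀) * |Real.cos θ| ^ α :=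
    fun θ => by ring
  simp_rw [hrw]
  rw [MeasureTheory.integral_const_mul]
  have hper : (∫ θ in Ioo (-π) π, |Real.cos θ| ^ α)
      = ∫ s in (0 : ℝ)..(2 * π), |Real.cos s| ^ α := by
    have h1 : (∫ θ in Ioo (-π) π, |Real.cos θ| ^ α)
        = ∫ θ in (-π)..π, |Real.cos θ| ^ α := by
      rw [intervalIntegral.integral_of_le (by linarith [Real.pi_pos]),
        integral_Ioc_eq_integral_Ioo]
    have hperiodic : Function.Periodic (fun s : ℝ => |Real.cos s| ^ α) (2 * π) := fun s => by
      simp [Real.cos_add_two_pi]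
    have h2 := hperiodic.intervalIntegral_add_eq (-π) 0
    simp only [zero_add] at h2
    rw [show -π + 2 * π = π by ring] at h2
    rw [h1, h2]
  rw [hper]
  ring

end Stmt3Aux

end Stmt3Aux

theorem stmt_3 (α : ℝ) (hα : 0 < α) (hα2 : α < 2) (z : EuclideanSpace ℝ (Fin 2)) :
    (∫ x : EuclideanSpace ℝ (Fin 2),
        (Complex.exp (Complex.I * ((inner ℝ z x : ℝ) : ℂ)) - 1 -
            Complex.I * (if ‖x‖ ≤ 1 then ((inner ℝ z x : ℝ) : ℂ) else 0)) *
          ((‖x‖ ^ (-2 - α) : ℝ) : ℂ)).re =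
      ((∫ r in Ioi (0:ℝ), (Real.cos r - 1) * r ^ (-1 - α)) *
          (∫ s in (0:ℝ)..(2 * Real.pi), |Real.cos s| ^ α)) * ‖z‖ ^ α ∧
    (∫ x : EuclideanSpace ℝ (Fin 2),
        (Complex.exp (Complex.I * ((inner ℝ z x : ℝ) : ℂ)) - 1 -
            Complex.I * (if ‖x‖ ≤ 1 then ((inner ℝ z x : ℝ) : ℂ) else 0)) *
          ((‖x‖ ^ (-2 - α) : ℝ) : ℂ)).im = 0 := by
  set F : EuclideanSpace ℝ (Fin 2) → ℂ := fun x =>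
    (Complex.exp (Complex.I * ((inner ℝ z x : ℝ) : ℂ)) - 1 -
        Complex.I * (if ‖x‖ ≤ 1 then ((inner ℝ z x : ℝ) : ℂ) else 0)) *
      ((‖x‖ ^ (-2 - α) : ℝ) : ℂ) with hF
  have him : (∫ x : EuclideanSpace ℝ (Fin 2), F x).im = 0 := by
    have hneg : ∀ x, F (-x) = (starRingEnd ℂ) (F x) := by
      intro x
      rw [hF]
      simp only [inner_neg_right, norm_neg]
      rw [Stmt3Aux.kdecomp, Stmt3Aux.kdecomp, map_add, map_mul, Complex.conj_ofReal,
        Complex.conj_ofReal, Complex.conj_I]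
      split_ifs <;> rw [Real.cos_neg, Real.sin_neg] <;> push_cast <;> ring
    have h1 : (∫ x, F x) = (starRingEnd ℂ) (∫ x, F x) := by
      conv_lhs => rw [← integral_neg_eq_self F volume]
      simp_rw [hneg]
      exact integral_conj
    have h2 := congrArg Complex.im h1
    rw [Complex.conj_im] at h2
    linarith
  refine ⟨?_, him⟩
  rcases eq_or_ne z 0 with rfl | hz
  · have hzero : ∀ x : EuclideanSpace ℝ (Fin 2), F x = 0 := by
      intro x
      rw [hF]
      simp [inner_zero_left]
    rw [show F = fun _ => (0 : ℂ) from funext hzero, integral_zero]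
    simp [Real.zero_rpow hα.ne']
  · set t := ‖z‖ with htdef
    have ht : 0 < t := norm_pos_iff.mpr hz
    set e := Complex.orthonormalBasisOneI.repr with he
    set w := e.symm z with hw
    have hwnorm : ‖w‖ = t := by rw [hw, e.symm.norm_map z]
    have hu1 : ‖((t : ℂ))⁻¹ * w‖ = 1 := by
      rw [norm_mul, norm_inv, Complex.norm_real, Real.norm_of_nonneg ht.le, hwnorm]
      field_simp
    set u : Circle := ⟨((t : ℂ))⁻¹ * w, mem_sphere_zero_iff_norm.mpr hu1⟩ with hu
    set R := rotation u with hR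
    have hinner : ∀ x : ℂ, (inner ℝ z (e (R x)) : ℝ) = t * x.re := by
      intro x
      have hz' : e w = z := by rw [hw]; exact e.apply_symm_apply z
      have hcoe : (↑u : ℂ) = ((t : ℂ))⁻¹ * w := rfl
      have h3 : (starRingEnd ℂ) w * w = ((t ^ 2 : ℝ) : ℂ) := by
        rw [mul_comm, Complex.mul_conj]
        rw [show Complex.normSq w = t ^ 2 by
          rw [Complex.normSq_eq_norm_sq, hwnorm]]
      have h2 : (starRingEnd ℂ) w * (↑u * x) = (t : ℂ) * x := by
        rw [hcoe, show (starRingEnd ℂ) w * ((t : ℂ)⁻¹ * w * x)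
          = ((starRingEnd ℂ) w * w) * x * ((t : ℂ))⁻¹ by ring, h3]
        have htne : ((t : ℝ) : ℂ) ≠ 0 := by
          simpa using ht.ne'
        field_simp
        push_cast; ring
      calc (inner ℝ z (e (R x)) : ℝ) = (inner ℝ (e w) (e (R x)) : ℝ) := by rw [hz']
        _ = (inner ℝ w (R x) : ℝ) := e.inner_map_map w (R x)
        _ = t * x.re := by
            rw [hR, rotation_apply, Complex.inner, mul_comm _ ((starRingEnd ℂ) w), h2, Complex.re_ofReal_mul]
    have hnorm : ∀ x : ℂ, ‖e (R x)‖ = ‖x‖ := fun x => by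
      rw [e.norm_map, R.norm_map]
    have hcomp1 : (∫ y : EuclideanSpace ℝ (Fin 2), F y) = ∫ x : ℂ, F (e x) :=
      (e.measurePreserving.integral_comp e.toHomeomorph.measurableEmbedding F).symm
    have hcomp2 : (∫ x : ℂ, F (e x)) = ∫ x : ℂ, F (e (R x)) :=
      (R.measurePreserving.integral_comp R.toHomeomorph.measurableEmbedding
        (fun x => F (e x))).symm
    have hfun : ∀ x : ℂ, F (e (R x)) =
        (Complex.exp (Complex.I * ((t * x.re : ℝ) : ℂ)) - 1 -
            Complex.I * (if ‖x‖ ≤ 1 then ((t * x.re : ℝ) : ℂ) else 0)) *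
          ((‖x‖ ^ (-2 - α) : ℝ) : ℂ) := by
      intro x
      rw [hF]
      dsimp only
      rw [hinner x, hnorm x]
    have htrans : (∫ y : EuclideanSpace ℝ (Fin 2), F y) = ∫ x : ℂ,
        (Complex.exp (Complex.I * ((t * x.re : ℝ) : ℂ)) - 1 -
            Complex.I * (if ‖x‖ ≤ 1 then ((t * x.re : ℝ) : ℂ) else 0)) *
          ((‖x‖ ^ (-2 - α) : ℝ) : ℂ) := by
      rw [hcomp1, hcomp2]
      exact integral_congr_ae (Filter.Eventually.of_forall hfun)
    have hint := Stmt3Aux.integrable_kernel hα hα2 t ht.le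
    have hre : (∫ x : ℂ,
        (Complex.exp (Complex.I * ((t * x.re : ℝ) : ℂ)) - 1 -
            Complex.I * (if ‖x‖ ≤ 1 then ((t * x.re : ℝ) : ℂ) else 0)) *
          ((‖x‖ ^ (-2 - α) : ℝ) : ℂ)).re
        = ∫ x : ℂ, (Real.cos (t * x.re) - 1) * ‖x‖ ^ (-2 - α) := by
      rw [show (∫ x : ℂ,
        (Complex.exp (Complex.I * ((t * x.re : ℝ) : ℂ)) - 1 -
            Complex.I * (if ‖x‖ ≤ 1 then ((t * x.re : ℝ) : ℂ) else 0)) *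
          ((‖x‖ ^ (-2 - α) : ℝ) : ℂ)).re = Complex.reCLM (∫ x : ℂ,
        (Complex.exp (Complex.I * ((t * x.re : ℝ) : ℂ)) - 1 -
            Complex.I * (if ‖x‖ ≤ 1 then ((t * x.re : ℝ) : ℂ) else 0)) *
          ((‖x‖ ^ (-2 - α) : ℝ) : ℂ)) from rfl,
        ← ContinuousLinearMap.integral_comp_comm Complex.reCLM hint]
      refine integral_congr_ae (Filter.Eventually.of_forall fun x => ?_)
      show ((Complex.exp (Complex.I * ((t * x.re : ℝ) : ℂ)) - 1 -
            Complex.I * (if ‖x‖ ≤ 1 then ((t * x.re : ℝ) : ℂ) else 0)) *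
          ((‖x‖ ^ (-2 - α) : ℝ) : ℂ)).re = _
      rw [Stmt3Aux.kdecomp]
      simp only [Complex.add_re, Complex.mul_re, Complex.ofReal_re, Complex.ofReal_im,
        Complex.I_re, Complex.I_im, mul_zero, mul_one, zero_mul, sub_self, add_zero, sub_zero]
    rw [htrans, hre, Stmt3Aux.polar_real hα hα2 t ht]
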